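/- Let G be a connected simple graph and let H be a connected induced subgraph of G with α(H) = α(G) having the minimum number of vertices among all such subgraphs. Then for every spanning tree T of H, every pendant vertex (leaf) of T belongs to a maximum independent set of H, and consequently T has at most α(G) pendant vertices. -/

import Mathlib

/-- A set of vertices is independent: pairwise nonadjacent. -/
def IndepSet {V : Type*} (G : SimpleGraph V) (s : Set V) : Prop :=
  s.Pairwise fun u v => ¬ G.Adj u v

/-- The independence number of a graph: the maximum size of an independent set. -/
noncomputable def indepNum {V : Type*} (G : SimpleGraph V) : ℕ :=
  sSup {n | ∃ t : Finset V, IndepSet G ↑t ∧ t.card = n}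

/-- An edge-colored graph is properly connected if between every pair of distinct
vertices there is a path in which no two consecutive edges have the same color. -/
def ProperlyConnected {V : Type*} (G : SimpleGraph V) (c : Sym2 V → ℕ) : Prop :=
  ∀ u v : V, u ≠ v → ∃ p : G.Walk u v, p.IsPath ∧ (p.edges.map c).Chain' (· ≠ ·)

/-- The optimal proper connection number of a monochromatic graph `G` (all edges
initially colored `1`): the minimum of `p + q` over all final colorings `c` making
`G` properly connected, where `p` is the number of recolored edges (edges whose
color is no longer `1`) and `q` is the number of distinct new colors used. -/
noncomputable def pcOpt {V : Type*} (G : SimpleGraph V) : ℕ :=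
  sInf {n | ∃ c : Sym2 V → ℕ, ProperlyConnected G c ∧
    n = {e | e ∈ G.edgeSet ∧ c e ≠ 1}.ncard
      + (c '' {e | e ∈ G.edgeSet ∧ c e ≠ 1}).ncard}

/-- The degree of a vertex. -/
noncomputable def vdeg {V : Type*} (G : SimpleGraph V) (v : V) : ℕ :=
  (G.neighborSet v).ncard

/-- The maximum degree of a graph. -/
noncomputable def maxDeg {V : Type*} (G : SimpleGraph V) : ℕ :=
  sSup {n | ∃ v, vdeg G v = n}

/-- A connected graph is α-minimal if every vertex is either a cut-vertex or its
deletion decreases the independence number. -/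
def AlphaMinimal {V : Type*} (G : SimpleGraph V) : Prop :=
  G.Connected ∧ ∀ v : V,
    ¬ (G.induce ({v}ᶜ : Set V)).Connected ∨
      indepNum (G.induce ({v}ᶜ : Set V)) < indepNum G

open SimpleGraph hiding indepNum

private lemma exists_adj_end {α : Type*} {G : SimpleGraph α} {a v : α} (q : G.Walk a v)
    (h : a ≠ v) : ∃ x ∈ q.support, G.Adj x v := by
  induction q with
  | nil => exact absurd rfl h
  | @cons a c v h' q' ih =>
    by_cases hc : c = v
    · subst hc; exact ⟨a, by simp, h'⟩
    · obtain ⟨x, hx, hadj⟩ := ih hc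
      exact ⟨x, by simp [hx], hadj⟩

private lemma leaf_not_mem_path {α : Type*} {G : SimpleGraph α} {a b v : α}
    (p : G.Walk a b) (hp : p.IsPath) (hdeg : (G.neighborSet v).ncard = 1)
    (ha : a ≠ v) (hb : b ≠ v) : v ∉ p.support := by
  classical
  intro hv
  obtain ⟨u, hu⟩ := Set.ncard_eq_one.mp hdeg
  obtain ⟨x, hxs, hxadj⟩ := exists_adj_end (p.takeUntil v hv) ha
  have hrnil : ¬ (p.dropUntil v hv).Nil := Walk.not_nil_of_ne (Ne.symm hb)
  obtain ⟨c, h', r', hr⟩ := Walk.not_nil_iff.mp hrnil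
  have hcs : c ∈ (p.dropUntil v hv).support.tail := by
    rw [hr, Walk.support_cons]
    exact r'.start_mem_support
  -- both x and c are the unique neighbor u
  have hx_u : x = u := by
    have : x ∈ G.neighborSet v := hxadj.symm
    rwa [hu, Set.mem_singleton_iff] at this
  have hc_u : c = u := by
    have : c ∈ G.neighborSet v := h'
    rwa [hu, Set.mem_singleton_iff] at this
  -- but the path support has x and c on disjoint parts
  have hnodup : p.support.Nodup := hp.support_nodup
  rw [← Walk.take_spec p hv, Walk.support_append] at hnodup
  exact (List.disjoint_of_nodup_append hnodup) hxs (hx_u ▸ hc_u ▸ hcs)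

private lemma reach_of_walk {V : Type*} {G : SimpleGraph V} {U : Set V}
    {T : SimpleGraph U} (hTle : T ≤ G.induce U) {W : Set V}
    {a b : U} (p : T.Walk a b) (hW : ∀ x : U, x ∈ p.support → (x : V) ∈ W) :
    (G.induce W).Reachable ⟨a, hW a p.start_mem_support⟩ ⟨b, hW b p.end_mem_support⟩ := by
  induction p with
  | nil => exact Reachable.refl _
  | @cons a c b h q ih =>
    have hW' : ∀ x : U, x ∈ q.support → (x : V) ∈ W := fun x hx =>
      hW x (by simp [hx])
    have h1 : (G.induce W).Adj ⟨a, hW a (Walk.start_mem_support _)⟩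
        ⟨c, hW' c q.start_mem_support⟩ := by
      exact hTle h
    exact h1.reachable.trans (ih hW')

private lemma indepNum_bddAbove {α : Type*} [Fintype α] (G : SimpleGraph α) :
    BddAbove {n | ∃ t : Finset α, IndepSet G ↑t ∧ t.card = n} :=
  ⟨Fintype.card α, fun n ⟨t, _, ht⟩ => ht ▸ t.card_le_univ⟩

private lemma card_le_indepNum {α : Type*} [Fintype α] {G : SimpleGraph α} {t : Finset α}
    (ht : IndepSet G ↑t) : t.card ≤ indepNum G :=
  le_csSup (indepNum_bddAbove G) ⟨t, ht, rfl⟩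

private lemma exists_max_indep {α : Type*} [Fintype α] (G : SimpleGraph α) :
    ∃ t : Finset α, IndepSet G ↑t ∧ t.card = indepNum G :=
  Nat.sSup_mem (s := {n | ∃ t : Finset α, IndepSet G ↑t ∧ t.card = n})
    ⟨0, ∅, by simp [IndepSet], rfl⟩ (indepNum_bddAbove G)


/-- If `H = G.induce U` is a connected induced subgraph of `G` with `α(H) = α(G)`
having the minimum number of vertices among all such subgraphs, then for every
spanning tree `T` of `H`, every pendant vertex of `T` belongs to a maximum
independent set of `H`, and `T` has at most `α(G)` pendant vertices. -/
theorem pendant_vertices_of_minimal_subgraph {V : Type*} [Fintype V]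
    (G : SimpleGraph V) (hG : G.Connected) (U : Set V)
    (hU : (G.induce U).Connected) (hα : indepNum (G.induce U) = indepNum G)
    (hmin : ∀ W : Set V, (G.induce W).Connected →
      indepNum (G.induce W) = indepNum G → U.ncard ≤ W.ncard)
    (T : SimpleGraph U) (hTle : T ≤ G.induce U) (hT : T.IsTree) :
    (∀ v : U, vdeg T v = 1 →
      ∃ I : Finset U, IndepSet (G.induce U) ↑I ∧
        I.card = indepNum (G.induce U) ∧ v ∈ I) ∧
    {v : U | vdeg T v = 1}.ncard ≤ indepNum G := by
    classical
  haveI : Fintype U := Fintype.ofFinite U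
  obtain ⟨I, hI, hIcard⟩ := exists_max_indep (G.induce U)
  have key : ∀ v : U, vdeg T v = 1 → ∀ J : Finset U, IndepSet (G.induce U) ↑J →
      J.card = indepNum (G.induce U) → v ∈ J := by
    intro v hv J hJ hJcard
    by_contra hvJ
    set W : Set V := U \ {(v : V)} with hWdef
    haveI : Fintype W := Fintype.ofFinite W
    obtain ⟨u, hu⟩ := Set.ncard_eq_one.mp hv
    have huv : T.Adj v u := by
      have : u ∈ T.neighborSet v := by rw [hu]; rfl
      exact this
    have huW : (u : V) ∈ W := ⟨u.2, fun h => huv.ne' (Subtype.ext h)⟩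
    -- connectivity of G.induce W
    have hWconn : (G.induce W).Connected := by
      rw [connected_iff]
      refine ⟨?_, ⟨⟨u, huW⟩⟩⟩
      rintro ⟨x, hxU, hxv⟩ ⟨y, hyU, hyv⟩
      set a : U := ⟨x, hxU⟩
      set b : U := ⟨y, hyU⟩
      obtain ⟨w⟩ := hT.isConnected.preconnected a b
      have hav : a ≠ v := fun h => hxv (by rw [← h]; rfl)
      have hbv : b ≠ v := fun h => hyv (by rw [← h]; rfl)
      have hvp : v ∉ w.bypass.support :=
        leaf_not_mem_path w.bypass w.bypass_isPath hv hav hbv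
      have hWmem : ∀ z : U, z ∈ w.bypass.support → (z : V) ∈ W := by
        intro z hz
        exact ⟨z.2, fun h => hvp ((Subtype.ext h : z = v) ▸ hz)⟩
      exact reach_of_walk hTle w.bypass hWmem
    -- indepNum (induce W) ≤ indepNum G
    have hle : indepNum (G.induce W) ≤ indepNum G := by
      obtain ⟨t, ht, htcard⟩ := exists_max_indep (G.induce W)
      rw [← hα, ← htcard]
      have hWU : W ⊆ U := Set.diff_subset
      set e : W ↪ U := ⟨Set.inclusion hWU, Set.inclusion_injective hWU⟩
      have hmap : IndepSet (G.induce U) ↑(t.map e) := by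
        intro x hx y hy hxy
        simp only [Finset.coe_map, Set.mem_image, Finset.mem_coe] at hx hy
        obtain ⟨x', hx', rfl⟩ := hx
        obtain ⟨y', hy', rfl⟩ := hy
        exact ht hx' hy' (fun h => hxy (by rw [h]))
      have := card_le_indepNum hmap
      rwa [Finset.card_map] at this
    -- indepNum G ≤ indepNum (induce W), via J which misses v
    have hge : indepNum G ≤ indepNum (G.induce W) := by
      set g : U → W := fun x => if h : (x : V) ∈ W then ⟨x, h⟩ else ⟨u, huW⟩ with hg
      have hmemW : ∀ x : U, x ∈ J → (x : V) ∈ W := by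
        intro x hx
        exact ⟨x.2, fun h => hvJ ((Subtype.ext h : x = v) ▸ hx)⟩
      have hval : ∀ x : U, x ∈ J → ((g x : V)) = (x : V) := by
        intro x hx
        rw [hg]; simp only [dif_pos (hmemW x hx)]
      have hinj : Set.InjOn g ↑J := by
        intro x hx y hy hgxy
        have : ((g x : V)) = ((g y : V)) := by rw [hgxy]
        rw [hval x hx, hval y hy] at this
        exact Subtype.ext this
      have hindep : IndepSet (G.induce W) ↑(J.image g) := by
        intro x hx y hy hxy
        simp only [Finset.coe_image, Set.mem_image, Finset.mem_coe] at hx hy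
        obtain ⟨x', hx', rfl⟩ := hx
        obtain ⟨y', hy', rfl⟩ := hy
        have hne : x' ≠ y' := fun h => hxy (by rw [h])
        have hadj : ¬ (G.induce U).Adj x' y' := hJ hx' hy' hne
        intro hWadj
        apply hadj
        have : G.Adj ((g x' : V)) ((g y' : V)) := hWadj
        rw [hval x' hx', hval y' hy'] at this
        exact this
      have hcard : (J.image g).card = J.card := Finset.card_image_of_injOn hinj
      calc indepNum G = J.card := by rw [← hα, hJcard]
        _ = (J.image g).card := hcard.symm
        _ ≤ indepNum (G.induce W) := card_le_indepNum hindep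
    have h1 := hmin W hWconn (le_antisymm hle hge)
    have h2 : W.ncard < U.ncard :=
      Set.ncard_diff_singleton_lt_of_mem v.2 (Set.toFinite U)
    omega
  refine ⟨fun v hv => ⟨I, hI, hIcard, key v hv I hI hIcard⟩, ?_⟩
  calc {v : U | vdeg T v = 1}.ncard ≤ (↑I : Set U).ncard :=
        Set.ncard_le_ncard (fun v hv => key v hv I hI hIcard) (Set.toFinite _)
    _ = I.card := Set.ncard_coe_finset I
    _ = indepNum G := by rw [hIcard, hα]
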